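/- Let e be an edge of a hypergraph system with |e| ≥ 2, g ∈ L_1(X, B_e, μ), and for every e' ∈ ∂e let u_{e'} be a B_{e'}-measurable function with 0 ≤ u_{e'} ≤ 1. Then |∫ g · ∏_{e' ∈ ∂e} u_{e'} dμ| ≤ ‖g‖_{S_{∂e}}, where ‖g‖_{S_{∂e}} = sup{ |∫_A g dμ| : A ∈ S_{∂e} }. -/

import Mathlib

open MeasureTheory ENNReal

/-- `A ⊆ ∏ i, X i` depends only on the coordinates in `e`. -/
def SetDependsOn {n : ℕ} {X : Fin n → Type*} (e : Finset (Fin n)) (A : Set (∀ i, X i)) : Prop :=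
  ∀ x y : ∀ i, X i, (∀ i ∈ e, x i = y i) → (x ∈ A ↔ y ∈ A)

/-- A function on `∏ i, X i` depending only on the coordinates in `e`. -/
def DependsOnF {n : ℕ} {X : Fin n → Type*} (e : Finset (Fin n)) (f : (∀ i, X i) → ℝ) : Prop :=
  ∀ x y : ∀ i, X i, (∀ i ∈ e, x i = y i) → f x = f y

/-- `A` belongs to `B_e`: it is measurable and depends only on the coordinates in `e`. -/
def CubeSet {n : ℕ} {X : Fin n → Type*} [∀ i, MeasurableSpace (X i)]
    (e : Finset (Fin n)) (A : Set (∀ i, X i)) : Prop :=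
  MeasurableSet A ∧ SetDependsOn e A

/-- The boundary `∂e` of `e`: subsets of `e` of size `|e| - 1`. -/
def bdry {n : ℕ} (e : Finset (Fin n)) : Finset (Finset (Fin n)) :=
  e.powerset.filter (fun e' => e'.card + 1 = e.card)

/-- `A ∈ S_{∂e}`: `A` is an intersection `⋂_{e' ∈ ∂e} A_{e'}` with `A_{e'} ∈ B_{e'}`. -/
def SPartial {n : ℕ} {X : Fin n → Type*} [∀ i, MeasurableSpace (X i)]
    (e : Finset (Fin n)) (A : Set (∀ i, X i)) : Prop :=
  ∃ F : Finset (Fin n) → Set (∀ i, X i),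
    (∀ e' ∈ bdry e, CubeSet e' (F e')) ∧ A = ⋂ e' ∈ bdry e, F e'

/-- Layer-cake / Fubini identity: `∫ h·w = ∫_{τ∈(0,1]} ∫_{w>τ} h dτ`. -/
lemma fubini_layer {Y : Type*} [MeasurableSpace Y] (μ : Measure Y) [IsProbabilityMeasure μ]
    (h : Y → ℝ) (hm : Measurable h) (hint : Integrable h μ)
    (w : Y → ℝ) (hw : Measurable w) (hw0 : ∀ x, 0 ≤ w x) (hw1 : ∀ x, w x ≤ 1) :
    ∫ x, h x * w x ∂μ = ∫ τ in Set.Ioc (0:ℝ) 1, (∫ x in {x | τ < w x}, h x ∂μ) := by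
  set ν : Measure ℝ := volume.restrict (Set.Ioc 0 1) with hν
  haveI : IsProbabilityMeasure ν := ⟨by
    simp [hν, Real.volume_Ioc]⟩
  set F : ℝ × Y → ℝ := fun p => if p.1 < w p.2 then h p.2 else 0 with hF
  have hsetm : MeasurableSet {p : ℝ × Y | p.1 < w p.2} :=
    measurableSet_lt measurable_fst (hw.comp measurable_snd)
  have hFmeas : Measurable F := Measurable.ite hsetm (hm.comp measurable_snd) measurable_const
  have hsnd : Integrable (fun p : ℝ × Y => h p.2) (ν.prod μ) := by
    have hmap : (ν.prod μ).map Prod.snd = μ := by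
      rw [Measure.map_snd_prod]; simp
    have := (integrable_map_measure hm.aestronglyMeasurable measurable_snd.aemeasurable).mp
      (by rw [hmap]; exact hint)
    exact this
  have hFint : Integrable F (ν.prod μ) := by
    refine Integrable.mono' hsnd.abs hFmeas.aestronglyMeasurable ?_
    refine Filter.Eventually.of_forall fun p => ?_
    by_cases hp : p.1 < w p.2 <;> simp [hF, hp, abs_nonneg]
  have h1 : ∫ p, F p ∂(ν.prod μ) = ∫ τ in Set.Ioc (0:ℝ) 1, (∫ x in {x | τ < w x}, h x ∂μ) := by
    rw [integral_prod F hFint]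
    refine setIntegral_congr_fun measurableSet_Ioc fun τ _ => ?_
    have : (fun x => F (τ, x)) = Set.indicator {x | τ < w x} h := by
      ext x; by_cases hx : τ < w x <;> simp [hF, Set.indicator, hx]
    rw [this, integral_indicator (measurableSet_lt measurable_const hw)]
  have h2 : ∫ p, F p ∂(ν.prod μ) = ∫ x, h x * w x ∂μ := by
    have swap := integral_integral_swap (f := fun τ x => F (τ, x))
      (μ := ν) (ν := μ) (by exact hFint)
    rw [integral_prod F hFint, swap]
    refine integral_congr_ae (Filter.Eventually.of_forall fun x => ?_)
    show (∫ τ, F (τ, x) ∂ν) = h x * w x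
    have : (fun τ => F (τ, x)) = Set.indicator (Set.Iio (w x)) (fun _ => h x) := by
      ext τ; by_cases hτ : τ < w x <;> simp [hF, Set.indicator, hτ]
    rw [this, integral_indicator measurableSet_Iio, hν,
      Measure.restrict_restrict measurableSet_Iio, setIntegral_const]
    have hset : Set.Iio (w x) ∩ Set.Ioc (0:ℝ) 1 = Set.Ioo 0 (w x) := by
      ext τ
      simp only [Set.mem_inter_iff, Set.mem_Iio, Set.mem_Ioc, Set.mem_Ioo]
      constructor
      · rintro ⟨h1, h2, h3⟩; exact ⟨h2, h1⟩
      · rintro ⟨h1, h2⟩; exact ⟨h2, h1, le_trans (le_of_lt h2) (hw1 x)⟩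
    rw [hset, Real.volume_real_Ioo_of_le (hw0 x)]
    simp only [smul_eq_mul, sub_zero, ENNReal.toReal_ofReal (hw0 x)]
    ring
  rw [← h2, h1]

/-- Inductive core of Fact 7.5. -/
lemma aux_ind {n : ℕ} {X : Fin n → Type*} [∀ i, MeasurableSpace (X i)]
    (μ : ∀ i, Measure (X i)) [∀ i, IsProbabilityMeasure (μ i)]
    (e : Finset (Fin n)) (K : ℝ)
    (s : Finset (Finset (Fin n))) :
    s ⊆ bdry e →
    ∀ g : (∀ i, X i) → ℝ, Measurable g → Integrable g (Measure.pi μ) →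
    (∀ A : Set (∀ i, X i), SPartial e A → |∫ x in A, g x ∂(Measure.pi μ)| ≤ K) →
    ∀ v : Finset (Fin n) → (∀ i, X i) → ℝ,
    (∀ e' ∈ s, Measurable (v e')) →
    (∀ e' ∈ s, DependsOnF e' (v e')) →
    (∀ e' ∈ s, ∀ x, 0 ≤ v e' x) → (∀ e' ∈ s, ∀ x, v e' x ≤ 1) →
    |∫ x, g x * ∏ e' ∈ s, v e' x ∂(Measure.pi μ)| ≤ K := by
  classical
  induction s using Finset.induction_on with
  | empty =>
    intro _ g hgm hgi hK v _ _ _ _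
    simp only [Finset.prod_empty, mul_one]
    have : ∫ x, g x ∂(Measure.pi μ) = ∫ x in Set.univ, g x ∂(Measure.pi μ) := by
      rw [setIntegral_univ]
    rw [this]
    refine hK Set.univ ⟨fun _ => Set.univ, fun e' _ => ⟨MeasurableSet.univ, fun _ _ _ => Iff.rfl⟩, ?_⟩
    simp
  | @insert e₀ t he₀ ih =>
    intro hs g hgm hgi hK v hvm hvd hv0 hv1
    have hts : t ⊆ bdry e := fun a ha => hs (Finset.mem_insert_of_mem ha)
    have he₀e : e₀ ∈ bdry e := hs (Finset.mem_insert_self e₀ t)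
    set h : (∀ i, X i) → ℝ := fun x => g x * ∏ e' ∈ t, v e' x with hh
    have hhm : Measurable h := hgm.mul (Finset.measurable_prod t
      (fun e' he' => hvm e' (Finset.mem_insert_of_mem he')))
    have hprod01 : ∀ x, 0 ≤ (∏ e' ∈ t, v e' x) ∧ (∏ e' ∈ t, v e' x) ≤ 1 := by
      intro x
      constructor
      · exact Finset.prod_nonneg fun e' he' => hv0 e' (Finset.mem_insert_of_mem he') x
      · exact Finset.prod_le_one (fun e' he' => hv0 e' (Finset.mem_insert_of_mem he') x)
          (fun e' he' => hv1 e' (Finset.mem_insert_of_mem he') x)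
    have hhi : Integrable h (Measure.pi μ) := by
      refine Integrable.mono' hgi.abs hhm.aestronglyMeasurable ?_
      refine Filter.Eventually.of_forall fun x => ?_
      rw [hh]
      simp only [Real.norm_eq_abs, abs_mul]
      calc |g x| * |∏ e' ∈ t, v e' x| ≤ |g x| * 1 := by
            refine mul_le_mul_of_nonneg_left ?_ (abs_nonneg _)
            rw [abs_of_nonneg (hprod01 x).1]; exact (hprod01 x).2
        _ = |g x| := mul_one _
    set w := v e₀ with hwdef
    have hwm : Measurable w := hvm e₀ (Finset.mem_insert_self e₀ t)
    have key : ∫ x, g x * ∏ e' ∈ insert e₀ t, v e' x ∂(Measure.pi μ)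
        = ∫ τ in Set.Ioc (0:ℝ) 1, (∫ x in {x | τ < w x}, h x ∂(Measure.pi μ)) := by
      rw [← fubini_layer (Measure.pi μ) h hhm hhi w hwm
        (fun x => hv0 e₀ (Finset.mem_insert_self e₀ t) x)
        (fun x => hv1 e₀ (Finset.mem_insert_self e₀ t) x)]
      refine integral_congr_ae (Filter.Eventually.of_forall fun x => ?_)
      show g x * ∏ e' ∈ insert e₀ t, v e' x = h x * w x
      rw [Finset.prod_insert he₀, hh]
      ring
    rw [key]
    have hbound : ∀ τ ∈ Set.Ioc (0:ℝ) 1,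
        |∫ x in {x | τ < w x}, h x ∂(Measure.pi μ)| ≤ K := by
      intro τ _
      set Aτ : Set (∀ i, X i) := {x | τ < w x} with hAτ
      have hAτm : MeasurableSet Aτ := measurableSet_lt measurable_const hwm
      have heq : ∫ x in Aτ, h x ∂(Measure.pi μ)
          = ∫ x, (Aτ.indicator g) x * ∏ e' ∈ t, v e' x ∂(Measure.pi μ) := by
        rw [← integral_indicator hAτm]
        refine integral_congr_ae (Filter.Eventually.of_forall fun x => ?_)
        by_cases hx : x ∈ Aτ <;> simp [hh, Set.indicator, hx]
      rw [heq]
      refine ih hts (Aτ.indicator g) (hgm.indicator hAτm) (hgi.indicator hAτm) ?_ v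
        (fun e' he' => hvm e' (Finset.mem_insert_of_mem he'))
        (fun e' he' => hvd e' (Finset.mem_insert_of_mem he'))
        (fun e' he' => hv0 e' (Finset.mem_insert_of_mem he'))
        (fun e' he' => hv1 e' (Finset.mem_insert_of_mem he'))
      intro A hA
      rw [setIntegral_indicator hAτm]
      obtain ⟨F, hF, hFA⟩ := hA
      refine hK (A ∩ Aτ) ⟨Function.update F e₀ (F e₀ ∩ Aτ), ?_, ?_⟩
      · intro e' he'
        by_cases h' : e' = e₀
        · subst h'
          rw [Function.update_self]
          refine ⟨(hF e' he').1.inter hAτm, ?_⟩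
          intro x y hxy
          have h1 := (hF e' he').2 x y hxy
          have h2 : w x = w y := hvd e' (Finset.mem_insert_self e' t) x y hxy
          simp only [Set.mem_inter_iff, hAτ, Set.mem_setOf_eq, h2, h1]
        · rw [Function.update_of_ne h']
          exact hF e' he'
      · rw [hFA]
        ext x
        simp only [Set.mem_inter_iff, Set.mem_iInter]
        constructor
        · rintro ⟨hx1, hx2⟩ e' he'
          by_cases h' : e' = e₀
          · subst h'
            rw [Function.update_self]
            exact ⟨hx1 e' he', hx2⟩
          · rw [Function.update_of_ne h']
            exact hx1 e' he'
        · intro hx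
          constructor
          · intro e' he'
            by_cases h' : e' = e₀
            · subst h'
              have := hx e' he'
              rw [Function.update_self] at this
              exact this.1
            · have := hx e' he'
              rw [Function.update_of_ne h'] at this
              exact this
          · have := hx e₀ he₀e
            rw [Function.update_self] at this
            exact this.2
    have hfin : volume (Set.Ioc (0:ℝ) 1) < ⊤ := by simp [Real.volume_Ioc]
    have hnorm := norm_setIntegral_le_of_norm_le_const (μ := volume)
      (f := fun τ => ∫ x in {x | τ < w x}, h x ∂(Measure.pi μ)) (C := K)
      hfin (fun τ hτ => by simpa using hbound τ hτ)
    rw [Real.norm_eq_abs] at hnorm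
    simpa [Real.volume_Ioc] using hnorm


/-- **Fact 7.5.** If `g ∈ L_1(X, B_e, μ)` and for each `e' ∈ ∂e` the function `u e'`
is `B_{e'}`-measurable with `0 ≤ u e' ≤ 1`, then `|∫ g ∏_{e' ∈ ∂e} u e' dμ| ≤ ‖g‖_{S_{∂e}}`
(stated for any upper bound `K` of the cut norm `sup { |∫_A g| : A ∈ S_{∂e} }`). -/
theorem stmt8 {n : ℕ} {X : Fin n → Type*} [∀ i, MeasurableSpace (X i)]
    (μ : ∀ i, Measure (X i)) [∀ i, IsProbabilityMeasure (μ i)]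
    (e : Finset (Fin n)) (he : 2 ≤ e.card)
    (g : (∀ i, X i) → ℝ) (hgmeas : Measurable g) (hgdep : DependsOnF e g)
    (hgint : Integrable g (Measure.pi μ))
    (u : Finset (Fin n) → (∀ i, X i) → ℝ)
    (humeas : ∀ e' ∈ bdry e, Measurable (u e'))
    (hudep : ∀ e' ∈ bdry e, DependsOnF e' (u e'))
    (hu0 : ∀ e' ∈ bdry e, ∀ x, 0 ≤ u e' x) (hu1 : ∀ e' ∈ bdry e, ∀ x, u e' x ≤ 1)
    (K : ℝ)
    (hK : ∀ A : Set (∀ i, X i), SPartial e A → |∫ x in A, g x ∂(Measure.pi μ)| ≤ K) :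
    |∫ x, g x * ∏ e' ∈ bdry e, u e' x ∂(Measure.pi μ)| ≤ K :=
  aux_ind μ e K (bdry e) (Finset.Subset.refl _) g hgmeas hgint hK u humeas hudep hu0 hu1
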